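/- Let X and Y be Banach spaces, x₁,…,x_k ∈ S_X, u₁,…,u_k ∈ S_Y, and suppose x ∈ S_X, y ∈ S_Y satisfy ‖xⱼ ± x‖ < (1 + ε)^{1/2} and ‖uⱼ ± y‖ < (1 + ε)^{1/2} for all j, for some ε > 0. Then ‖xⱼ ⊗ uⱼ + x ⊗ y‖_{X ⊗̂π Y} < 1 + ε for every j ∈ {1, …, k}. -/
import Mathlib


open TensorProduct

/-- The projective tensor norm on the algebraic tensor product `X ⊗ Y`. -/
noncomputable def projNorm {X Y : Type*} [NormedAddCommGroup X] [NormedSpace ℝ X]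
    [NormedAddCommGroup Y] [NormedSpace ℝ Y] (u : X ⊗[ℝ] Y) : ℝ :=
  sInf {r : ℝ | ∃ (n : ℕ) (x : Fin n → X) (y : Fin n → Y),
    u = ∑ i, x i ⊗ₜ[ℝ] y i ∧ r = ∑ i, ‖x i‖ * ‖y i‖}

theorem stmt15 {X Y : Type*} [NormedAddCommGroup X] [NormedSpace ℝ X] [CompleteSpace X]
    [NormedAddCommGroup Y] [NormedSpace ℝ Y] [CompleteSpace Y]
    (k : ℕ) (xs : Fin k → X) (us : Fin k → Y)
    (hxs : ∀ j, ‖xs j‖ = 1) (hus : ∀ j, ‖us j‖ = 1)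
    (x : X) (y : Y) (hx : ‖x‖ = 1) (hy : ‖y‖ = 1)
    (ε : ℝ) (hε : 0 < ε)
    (h1 : ∀ j, ‖xs j + x‖ < (1 + ε) ^ ((1 : ℝ) / 2))
    (h2 : ∀ j, ‖xs j - x‖ < (1 + ε) ^ ((1 : ℝ) / 2))
    (h3 : ∀ j, ‖us j + y‖ < (1 + ε) ^ ((1 : ℝ) / 2))
    (h4 : ∀ j, ‖us j - y‖ < (1 + ε) ^ ((1 : ℝ) / 2)) :
    ∀ j, projNorm (xs j ⊗ₜ[ℝ] us j + x ⊗ₜ[ℝ] y) < 1 + ε := by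
  intro j
  set s : ℝ := (1 + ε) ^ ((1 : ℝ) / 2) with hs
  have hεpos : (0:ℝ) < 1 + ε := by linarith
  have hspos : 0 < s := Real.rpow_pos_of_pos hεpos _
  have hss : s * s = 1 + ε := by
    rw [hs, ← Real.rpow_add hεpos]
    norm_num
  set a := xs j
  set c := us j
  -- representation with two terms
  set X1 : Fin 2 → X := ![(1/2 : ℝ) • (a + x), (1/2 : ℝ) • (a - x)] with hX1
  set Y1 : Fin 2 → Y := ![c + y, c - y] with hY1
  have hrep : a ⊗ₜ[ℝ] c + x ⊗ₜ[ℝ] y = ∑ i, X1 i ⊗ₜ[ℝ] Y1 i := by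
    rw [Fin.sum_univ_two]
    simp only [hX1, hY1, Matrix.cons_val_zero, Matrix.cons_val_one, Matrix.head_cons]
    rw [← TensorProduct.smul_tmul', ← TensorProduct.smul_tmul']
    rw [TensorProduct.add_tmul, TensorProduct.sub_tmul,
      TensorProduct.tmul_add, TensorProduct.tmul_sub,
      TensorProduct.tmul_add, TensorProduct.tmul_sub]
    module
  have hmem : (∑ i, ‖X1 i‖ * ‖Y1 i‖) ∈ {r : ℝ | ∃ (n : ℕ) (xf : Fin n → X) (yf : Fin n → Y),
      a ⊗ₜ[ℝ] c + x ⊗ₜ[ℝ] y = ∑ i, xf i ⊗ₜ[ℝ] yf i ∧ r = ∑ i, ‖xf i‖ * ‖yf i‖} :=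
    ⟨2, X1, Y1, hrep, rfl⟩
  have hbdd : BddBelow {r : ℝ | ∃ (n : ℕ) (xf : Fin n → X) (yf : Fin n → Y),
      a ⊗ₜ[ℝ] c + x ⊗ₜ[ℝ] y = ∑ i, xf i ⊗ₜ[ℝ] yf i ∧ r = ∑ i, ‖xf i‖ * ‖yf i‖} := by
    refine ⟨0, fun r hr => ?_⟩
    obtain ⟨n, xf, yf, -, rfl⟩ := hr
    exact Finset.sum_nonneg fun i _ => mul_nonneg (norm_nonneg _) (norm_nonneg _)
  have hle : projNorm (a ⊗ₜ[ℝ] c + x ⊗ₜ[ℝ] y) ≤ ∑ i, ‖X1 i‖ * ‖Y1 i‖ :=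
    csInf_le hbdd hmem
  refine lt_of_le_of_lt hle ?_
  rw [Fin.sum_univ_two]
  simp only [hX1, hY1, Matrix.cons_val_zero, Matrix.cons_val_one, Matrix.head_cons]
  rw [norm_smul, norm_smul]
  have e1 : ‖(1/2 : ℝ)‖ = (1/2 : ℝ) := by norm_num
  rw [e1]
  have t1 : (1/2 : ℝ) * ‖a + x‖ * ‖c + y‖ ≤ (1/2) * (s * s) := by
    rw [mul_assoc]
    refine mul_le_mul_of_nonneg_left ?_ (by norm_num)
    exact le_of_lt (mul_lt_mul'' (h1 j) (h3 j) (norm_nonneg _) (norm_nonneg _))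
  have t2 : (1/2 : ℝ) * ‖a - x‖ * ‖c - y‖ < (1/2) * (s * s) := by
    rw [mul_assoc]
    refine mul_lt_mul_of_pos_left ?_ (by norm_num)
    exact mul_lt_mul'' (h2 j) (h4 j) (norm_nonneg _) (norm_nonneg _)
  nlinarith [hss]
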